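/- Let f: ℝ^m → ℝ^m, g: ℝ^N → ℝ^N and J: ℝ^m → ℝ^N be C¹ maps with g ∘ J = J ∘ f. Let K ⊆ ℝ^m be a compact set with f(K) ⊆ K, and suppose the derivative DJ(x) is injective for every x ∈ K. Then there exist constants 0 < c ≤ C such that for every x ∈ K, every n ∈ ℕ and every v ∈ ℝ^m: c ‖Dfⁿ(x) v‖ ≤ ‖D(gⁿ)(J(x)) (DJ(x) v)‖ ≤ C ‖Dfⁿ(x) v‖. In particular, if for some x ∈ K and v ≠ 0 the limit λ = lim_{n→∞} (1/n) ln ‖Dfⁿ(x) v‖ exists, then lim_{n→∞} (1/n) ln ‖D(gⁿ)(J(x)) (DJ(x) v)‖ = λ; that is, every Lyapunov exponent of f along the orbit of x is also a Lyapunov exponent of g along the orbit of J(x). -/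

import Mathlib

open Filter Topology

/-- Dechert–Gencay: if g ∘ J = J ∘ f with f, g, J of class C¹,
K compact and f-invariant, and DJ injective on K, then the derivatives of the
iterates of g along J-images are uniformly comparable to those of f; in
particular the Lyapunov exponents of f along orbits in K are Lyapunov
exponents of g along the corresponding J-orbits. -/
theorem conjugacy_preserves_Lyapunov_exponents {m N : ℕ}
    (f : EuclideanSpace ℝ (Fin m) → EuclideanSpace ℝ (Fin m))
    (g : EuclideanSpace ℝ (Fin N) → EuclideanSpace ℝ (Fin N))
    (J : EuclideanSpace ℝ (Fin m) → EuclideanSpace ℝ (Fin N))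
    (hf : ContDiff ℝ 1 f) (hg : ContDiff ℝ 1 g) (hJ : ContDiff ℝ 1 J)
    (hconj : g ∘ J = J ∘ f)
    (K : Set (EuclideanSpace ℝ (Fin m))) (hK : IsCompact K) (hfK : f '' K ⊆ K)
    (hDJ : ∀ x ∈ K, Function.Injective (fderiv ℝ J x)) :
    ∃ c C : ℝ, 0 < c ∧ c ≤ C ∧
      (∀ x ∈ K, ∀ (n : ℕ) (v : EuclideanSpace ℝ (Fin m)),
        c * ‖fderiv ℝ (f^[n]) x v‖ ≤ ‖fderiv ℝ (g^[n]) (J x) (fderiv ℝ J x v)‖ ∧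
        ‖fderiv ℝ (g^[n]) (J x) (fderiv ℝ J x v)‖ ≤ C * ‖fderiv ℝ (f^[n]) x v‖) ∧
      (∀ x ∈ K, ∀ v : EuclideanSpace ℝ (Fin m), v ≠ 0 → ∀ lam : ℝ,
        Tendsto (fun n : ℕ => (1 / n : ℝ) * Real.log ‖fderiv ℝ (f^[n]) x v‖)
          atTop (nhds lam) →
        Tendsto (fun n : ℕ =>
            (1 / n : ℝ) * Real.log ‖fderiv ℝ (g^[n]) (J x) (fderiv ℝ J x v)‖)
          atTop (nhds lam)) := by
  classical
  have hJd : Differentiable ℝ J := hJ.differentiable one_ne_zero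
  have hfd : Differentiable ℝ f := hf.differentiable one_ne_zero
  have hgd : Differentiable ℝ g := hg.differentiable one_ne_zero
  have hfn : ∀ n, Differentiable ℝ (f^[n]) := by
    intro n
    induction n with
    | zero => simp only [Function.iterate_zero]; exact differentiable_id
    | succ k ih => rw [Function.iterate_succ]; exact ih.comp hfd
  have hgn : ∀ n, Differentiable ℝ (g^[n]) := by
    intro n
    induction n with
    | zero => simp only [Function.iterate_zero]; exact differentiable_id
    | succ k ih => rw [Function.iterate_succ]; exact ih.comp hgd
  have hconj_n : ∀ n x, g^[n] (J x) = J (f^[n] x) := by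
    intro n
    induction n with
    | zero => intro x; simp
    | succ k ih =>
      intro x
      have hgJ : g (J x) = J (f x) := congrFun hconj x
      rw [Function.iterate_succ_apply, Function.iterate_succ_apply, hgJ, ih (f x)]
  have key : ∀ (n : ℕ) (x : EuclideanSpace ℝ (Fin m)) (v : EuclideanSpace ℝ (Fin m)),
      fderiv ℝ (g^[n]) (J x) (fderiv ℝ J x v)
        = fderiv ℝ J (f^[n] x) (fderiv ℝ (f^[n]) x v) := by
    intro n x v
    have e1 : fderiv ℝ (g^[n] ∘ J) x = (fderiv ℝ (g^[n]) (J x)).comp (fderiv ℝ J x) :=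
      fderiv_comp x ((hgn n).differentiableAt) (hJd.differentiableAt)
    have e2 : fderiv ℝ (J ∘ f^[n]) x = (fderiv ℝ J (f^[n] x)).comp (fderiv ℝ (f^[n]) x) :=
      fderiv_comp x (hJd.differentiableAt) ((hfn n).differentiableAt)
    have e3 : (g^[n] ∘ J) = (J ∘ f^[n]) := funext fun y => hconj_n n y
    have e4 := e1.symm.trans ((by rw [e3] : fderiv ℝ (g^[n] ∘ J) x = fderiv ℝ (J ∘ f^[n]) x).trans e2)
    have := ContinuousLinearMap.ext_iff.mp e4 v
    simpa using this
  have hinv : ∀ x ∈ K, ∀ n : ℕ, f^[n] x ∈ K := by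
    intro x hx n
    induction n with
    | zero => simpa using hx
    | succ k ih =>
      rw [Function.iterate_succ_apply']
      exact hfK ⟨_, ih, rfl⟩
  have hcontDJ : Continuous fun y => fderiv ℝ J y := hJ.continuous_fderiv one_ne_zero
  by_cases hKne : K.Nonempty
  · by_cases hs : (Metric.sphere (0 : EuclideanSpace ℝ (Fin m)) 1).Nonempty
    · -- upper bound
      obtain ⟨y₀, hy₀K, hC'⟩ := hK.exists_isMaxOn hKne hcontDJ.norm.continuousOn
      have hC : ∀ y ∈ K, ‖fderiv ℝ J y‖ ≤ ‖fderiv ℝ J y₀‖ := fun y hy => hC' hy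
      set C₁ : ℝ := max ‖fderiv ℝ J y₀‖ 1 with hC₁def
      have hC₁1 : (1 : ℝ) ≤ C₁ := le_max_right _ _
      -- lower bound via compactness of K × sphere
      have hScomp : IsCompact (K ×ˢ Metric.sphere (0 : EuclideanSpace ℝ (Fin m)) 1) :=
        hK.prod (isCompact_sphere _ _)
      have hFcont : Continuous fun p : EuclideanSpace ℝ (Fin m) × EuclideanSpace ℝ (Fin m) =>
          ‖fderiv ℝ J p.1 p.2‖ :=
        ((hcontDJ.comp continuous_fst).clm_apply continuous_snd).norm
      obtain ⟨p₀, hp₀, hmin'⟩ := hScomp.exists_isMinOn (hKne.prod hs) hFcont.continuousOn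
      have hmin : ∀ p ∈ K ×ˢ Metric.sphere (0 : EuclideanSpace ℝ (Fin m)) 1,
          ‖fderiv ℝ J p₀.1 p₀.2‖ ≤ ‖fderiv ℝ J p.1 p.2‖ := fun p hp => hmin' hp
      set c₀ : ℝ := ‖fderiv ℝ J p₀.1 p₀.2‖ with hc₀def
      have hp₀K : p₀.1 ∈ K := hp₀.1
      have hp₀s : ‖p₀.2‖ = 1 := by simpa using hp₀.2
      have hc₀pos : 0 < c₀ := by
        rw [hc₀def, norm_pos_iff]
        intro h
        have h2 : p₀.2 = 0 := by
          apply hDJ p₀.1 hp₀K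
          simpa using h
        rw [h2] at hp₀s; simp at hp₀s
      set c₁ : ℝ := min c₀ 1 with hc₁def
      have hc₁pos : 0 < c₁ := lt_min hc₀pos one_pos
      have hc₁1 : c₁ ≤ 1 := min_le_right _ _
      -- uniform lower bound
      have hlow : ∀ y ∈ K, ∀ w : EuclideanSpace ℝ (Fin m),
          c₀ * ‖w‖ ≤ ‖fderiv ℝ J y w‖ := by
        intro y hy w
        rcases eq_or_ne w 0 with rfl | hw
        · simp
        · have hwpos : (0 : ℝ) < ‖w‖ := norm_pos_iff.mpr hw
          have hu : ((y, ‖w‖⁻¹ • w) : _ × _) ∈ K ×ˢ Metric.sphere (0 : EuclideanSpace ℝ (Fin m)) 1 := by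
            refine ⟨hy, ?_⟩
            simp [norm_smul, abs_of_pos (inv_pos.mpr hwpos), inv_mul_cancel₀ hwpos.ne']
          have := hmin _ hu
          have heq : ‖fderiv ℝ J y (‖w‖⁻¹ • w)‖ = ‖w‖⁻¹ * ‖fderiv ℝ J y w‖ := by
            rw [map_smul, norm_smul, norm_inv, norm_norm]
          rw [heq] at this
          calc c₀ * ‖w‖ ≤ (‖w‖⁻¹ * ‖fderiv ℝ J y w‖) * ‖w‖ :=
                mul_le_mul_of_nonneg_right this hwpos.le
            _ = ‖fderiv ℝ J y w‖ := by field_simp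
      have hup : ∀ y ∈ K, ∀ w : EuclideanSpace ℝ (Fin m),
          ‖fderiv ℝ J y w‖ ≤ C₁ * ‖w‖ := by
        intro y hy w
        calc ‖fderiv ℝ J y w‖ ≤ ‖fderiv ℝ J y‖ * ‖w‖ := (fderiv ℝ J y).le_opNorm w
          _ ≤ C₁ * ‖w‖ :=
            mul_le_mul_of_nonneg_right ((hC y hy).trans (le_max_left _ _)) (norm_nonneg w)
      -- main comparability
      have main : ∀ x ∈ K, ∀ (n : ℕ) (v : EuclideanSpace ℝ (Fin m)),
          c₁ * ‖fderiv ℝ (f^[n]) x v‖ ≤ ‖fderiv ℝ (g^[n]) (J x) (fderiv ℝ J x v)‖ ∧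
          ‖fderiv ℝ (g^[n]) (J x) (fderiv ℝ J x v)‖ ≤ C₁ * ‖fderiv ℝ (f^[n]) x v‖ := by
        intro x hx n v
        rw [key n x v]
        have hKn : f^[n] x ∈ K := hinv x hx n
        constructor
        · calc c₁ * ‖fderiv ℝ (f^[n]) x v‖ ≤ c₀ * ‖fderiv ℝ (f^[n]) x v‖ :=
              mul_le_mul_of_nonneg_right (min_le_left _ _) (norm_nonneg _)
            _ ≤ _ := hlow _ hKn _
        · exact hup _ hKn _
      refine ⟨c₁, C₁, hc₁pos, hc₁1.trans hC₁1, main, ?_⟩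
      intro x hx v hv lam htend
      set a : ℕ → ℝ := fun n => (1 / n : ℝ) * Real.log ‖fderiv ℝ (f^[n]) x v‖ with ha
      have hlower : Tendsto (fun n : ℕ => (1 / n : ℝ) * Real.log c₁ + a n) atTop (nhds lam) := by
        have h0 : Tendsto (fun n : ℕ => (1 / n : ℝ) * Real.log c₁) atTop (nhds 0) := by
          simpa using tendsto_one_div_atTop_nhds_zero_nat.mul_const (Real.log c₁)
        simpa using h0.add htend
      have hupper : Tendsto (fun n : ℕ => (1 / n : ℝ) * Real.log C₁ + a n) atTop (nhds lam) := by
        have h0 : Tendsto (fun n : ℕ => (1 / n : ℝ) * Real.log C₁) atTop (nhds 0) := by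
          simpa using tendsto_one_div_atTop_nhds_zero_nat.mul_const (Real.log C₁)
        simpa using h0.add htend
      refine tendsto_of_tendsto_of_tendsto_of_le_of_le hlower hupper ?_ ?_
      · intro n
        have hn : (0 : ℝ) ≤ 1 / n := by positivity
        have h := main x hx n v
        rcases eq_or_ne ‖fderiv ℝ (f^[n]) x v‖ 0 with hr0 | hr0
        · have ht0 : ‖fderiv ℝ (g^[n]) (J x) (fderiv ℝ J x v)‖ = 0 :=
            le_antisymm (by simpa [hr0] using h.2) (norm_nonneg _)
          have hlc : Real.log c₁ ≤ 0 := Real.log_nonpos hc₁pos.le hc₁1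
          simp only [ha, hr0, ht0, Real.log_zero, mul_zero, add_zero]
          exact mul_nonpos_of_nonneg_of_nonpos hn hlc
        · have hrpos : 0 < ‖fderiv ℝ (f^[n]) x v‖ := (norm_nonneg _).lt_of_ne (Ne.symm hr0)
          have hlog : Real.log c₁ + Real.log ‖fderiv ℝ (f^[n]) x v‖
              ≤ Real.log ‖fderiv ℝ (g^[n]) (J x) (fderiv ℝ J x v)‖ := by
            rw [← Real.log_mul hc₁pos.ne' hrpos.ne']
            exact Real.log_le_log (by positivity) h.1
          have h2 := mul_le_mul_of_nonneg_left hlog hn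
          simpa [ha, mul_add] using h2
      · intro n
        have hn : (0 : ℝ) ≤ 1 / n := by positivity
        have h := main x hx n v
        rcases eq_or_ne ‖fderiv ℝ (f^[n]) x v‖ 0 with hr0 | hr0
        · have ht0 : ‖fderiv ℝ (g^[n]) (J x) (fderiv ℝ J x v)‖ = 0 :=
            le_antisymm (by simpa [hr0] using h.2) (norm_nonneg _)
          have hlC : (0 : ℝ) ≤ Real.log C₁ := Real.log_nonneg hC₁1
          simp only [ha, hr0, ht0, Real.log_zero, mul_zero, add_zero]
          exact mul_nonneg hn hlC
        · have hrpos : 0 < ‖fderiv ℝ (f^[n]) x v‖ := (norm_nonneg _).lt_of_ne (Ne.symm hr0)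
          have htpos : 0 < ‖fderiv ℝ (g^[n]) (J x) (fderiv ℝ J x v)‖ :=
            lt_of_lt_of_le (by positivity) h.1
          have hC₁pos : (0 : ℝ) < C₁ := lt_of_lt_of_le one_pos hC₁1
          have hlog : Real.log ‖fderiv ℝ (g^[n]) (J x) (fderiv ℝ J x v)‖
              ≤ Real.log C₁ + Real.log ‖fderiv ℝ (f^[n]) x v‖ := by
            rw [← Real.log_mul hC₁pos.ne' hrpos.ne']
            exact Real.log_le_log htpos h.2
          have h2 := mul_le_mul_of_nonneg_left hlog hn
          simpa [ha, mul_add] using h2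
    · -- sphere empty: every vector is zero
      have hzero : ∀ v : EuclideanSpace ℝ (Fin m), v = 0 := by
        intro v
        by_contra hv
        exact hs ⟨‖v‖⁻¹ • v, by
          simp [norm_smul, abs_of_pos (inv_pos.mpr (norm_pos_iff.mpr hv)),
            inv_mul_cancel₀ (norm_pos_iff.mpr hv).ne']⟩
      refine ⟨1, 1, one_pos, le_rfl, ?_, ?_⟩
      · intro x hx n v
        rw [hzero v]
        simp [hzero (fderiv ℝ (f^[n]) x 0)]
      · intro x hx v hv
        exact absurd (hzero v) hv
  · refine ⟨1, 1, one_pos, le_rfl, ?_, ?_⟩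
    · intro x hx; exact absurd ⟨x, hx⟩ hKne
    · intro x hx; exact absurd ⟨x, hx⟩ hKne
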